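/- arXiv:1712.04345 — 5 statements merged into one kernel-verified Lean document; each statement's English description precedes it below -/
import Mathlib

section
/- If P_n = a·(10^m − 1)/9 for some a ∈ {1, 2, …, 9} and some positive integer m, then n ∈ {0, 1, 2, 3}. -/
/-- The Pell sequence: `P 0 = 0`, `P 1 = 1`, `P (n+2) = 2 * P (n+1) + P n`. -/
def pell : ℕ → ℕ
  | 0 => 0
  | 1 => 1
  | n + 2 => 2 * pell (n + 1) + pell n

lemma pell_step (n : ℕ) : pell (n + 2) = 2 * pell (n + 1) + pell n := rfl

lemma pell_mono : Monotone pell := by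
  apply monotone_nat_of_le_succ
  intro n
  match n with
  | 0 => simp [pell]
  | k + 1 => rw [pell_step]; omega

lemma pell_period : ∀ n, pell (n + 24) % 440 = pell n % 440 ∧
    pell (n + 25) % 440 = pell (n + 1) % 440 := by
  intro n
  induction n with
  | zero => constructor <;> norm_num [pell]
  | succ k ih =>
    obtain ⟨h1, h2⟩ := ih
    refine ⟨h2, ?_⟩
    have e1 : k + 1 + 25 = k + 24 + 2 := by omega
    have e3 : k + 1 + 1 = k + 2 := by omega
    rw [e1, e3, pell_step (k + 24), pell_step k]
    have e2 : k + 24 + 1 = k + 25 := by omega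
    rw [e2]
    omega

lemma pell_mod_mod : ∀ n, pell n % 440 = pell (n % 24) % 440 := by
  intro n
  induction n using Nat.strong_induction_on with
  | _ n ih =>
    by_cases h : n < 24
    · rw [Nat.mod_eq_of_lt h]
    · have h24 : n - 24 + 24 = n := by omega
      rw [← h24, (pell_period (n - 24)).1, ih (n - 24) (by omega),
        Nat.add_mod_right]

lemma nine_dvd (m : ℕ) : 9 ∣ 10 ^ m - 1 := by
  induction m with
  | zero => simp
  | succ k ih =>
    have h1 : (1:ℕ) ≤ 10 ^ k := Nat.one_le_pow _ _ (by norm_num)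
    obtain ⟨c, hc⟩ := ih
    refine ⟨10 * c + 1, ?_⟩
    have : 10 ^ (k + 1) = 10 * 10 ^ k := by ring
    omega

lemma rep_succ (m : ℕ) : (10 ^ (m + 1) - 1) / 9 = 10 * ((10 ^ m - 1) / 9) + 1 := by
  obtain ⟨c, hc⟩ := nine_dvd m
  have h1 : (1:ℕ) ≤ 10 ^ m := Nat.one_le_pow _ _ (by norm_num)
  have hq : (10 ^ m - 1) / 9 = c := by omega
  have h2 : 10 ^ (m + 1) - 1 = 9 * (10 * c + 1) := by
    have : 10 ^ (m + 1) = 10 * 10 ^ m := by ring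
    omega
  rw [hq, h2, Nat.mul_div_cancel_left _ (by norm_num)]

lemma rep_mod (m : ℕ) (hm : 2 ≤ m) :
    (10 ^ m - 1) / 9 % 440 = 11 ∨ (10 ^ m - 1) / 9 % 440 = 111 ∨
    (10 ^ m - 1) / 9 % 440 = 231 := by
  induction m, hm using Nat.le_induction with
  | base => norm_num
  | succ k hk ih =>
    rw [rep_succ]
    rcases ih with h | h | h <;> omega

set_option maxRecDepth 4000 in
lemma key : ∀ k < 24, ∀ b < 9, ∀ s < 232,
    (s = 11 ∨ s = 111 ∨ s = 231) → pell k % 440 ≠ (b + 1) * s % 440 := by decide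

/-- If `P_n = a·(10^m − 1)/9` for some `a ∈ {1, …, 9}` and some positive
integer `m`, then `n ∈ {0, 1, 2, 3}`. -/
theorem pell_repdigit (n m a : ℕ) (hm : 0 < m) (ha1 : 1 ≤ a) (ha9 : a ≤ 9)
    (h : pell n = a * ((10 ^ m - 1) / 9)) :
    n = 0 ∨ n = 1 ∨ n = 2 ∨ n = 3 := by
  rcases Nat.lt_or_ge m 2 with hm2 | hm2
  · -- m = 1
    have hme : m = 1 := by omega
    subst hme
    have : pell n = a := by simpa using h
    by_contra hcon
    have hn4 : 4 ≤ n := by omega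
    have := pell_mono hn4
    have h4 : pell 4 = 12 := by norm_num [pell]
    omega
  · exfalso
    have hr := rep_mod m hm2
    set r := (10 ^ m - 1) / 9 with hrdef
    have hmod : pell n % 440 = a * r % 440 := by rw [h]
    rw [pell_mod_mod] at hmod
    have hmul : a * r % 440 = a * (r % 440) % 440 := by
      conv_lhs => rw [Nat.mul_mod, Nat.mod_eq_of_lt (show a < 440 by omega)]
    rw [hmul] at hmod
    have ha : a - 1 + 1 = a := by omega
    rw [← ha] at hmod
    exact key (n % 24) (Nat.mod_lt _ (by norm_num)) (a - 1) (by omega) (r % 440) (by omega) hr hmod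
end

section
/- For every prime p, the inequality e_p ≤ (p + 1)·log α / (2·log p) holds, where α = 1 + √2, z(p) is the smallest positive integer k such that p divides P_k, and e_p is the exponent of p in the factorization of P_{z(p)} (i.e., e_p = ν_p(P_{z(p)})). -/
/-- The order of appearance of `p` in the Pell sequence: the smallest positive
integer `k` with `p ∣ P k`. -/
noncomputable def pellOrder (p : ℕ) : ℕ := sInf {k : ℕ | 0 < k ∧ p ∣ pell k}

/-! ### Basic lemmas on the Pell sequence -/

lemma pell_pos : ∀ n, 0 < pell (n + 1)
  | 0 => one_pos
  | n + 1 => by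
      show 0 < 2 * pell (n + 1) + pell n
      have := pell_pos n
      omega

lemma pell_add : ∀ m n, pell (m + n + 1) = pell (m + 1) * pell (n + 1) + pell m * pell n := by
  have key : ∀ m, (∀ n, pell (m + n + 1) = pell (m + 1) * pell (n + 1) + pell m * pell n) ∧
      (∀ n, pell (m + 1 + n + 1) = pell (m + 2) * pell (n + 1) + pell (m + 1) * pell n) := by
    intro m
    induction m with
    | zero =>
      constructor
      · intro n; simp [pell]
      · intro n
        have e : 0 + 1 + n + 1 = n + 2 := by ring
        rw [e]
        show 2 * pell (n+1) + pell n = _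
        simp [pell]
    | succ m ih =>
      refine ⟨ih.2, ?_⟩
      intro n
      have h1 := ih.1 n
      have h2 := ih.2 n
      have e : m + 1 + 1 + n + 1 = (m + n + 1) + 2 := by ring
      rw [e]
      show 2 * pell (m + n + 1 + 1) + pell (m + n + 1) = _
      have e2 : m + n + 1 + 1 = m + 1 + n + 1 := by ring
      rw [e2, h2, h1]
      show _ = pell (m + 1 + 2) * pell (n+1) + pell (m + 2) * pell n
      have : pell (m + 1 + 2) = 2 * pell (m + 2) + pell (m + 1) := rfl
      rw [this]
      have : pell (m + 2) = 2 * pell (m + 1) + pell m := rfl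
      rw [this]
      ring
  exact fun m => (key m).1

lemma pell_coprime : ∀ n, Nat.Coprime (pell n) (pell (n + 1)) := by
  intro n
  induction n with
  | zero => simp [pell, Nat.Coprime]
  | succ n ih =>
    show Nat.Coprime (pell (n+1)) (2 * pell (n + 1) + pell n)
    have : Nat.Coprime (pell (n+1)) (pell n) := ih.symm
    simpa [Nat.Coprime, Nat.add_comm, Nat.gcd_add_mul_right_right] using this

lemma pell_catalan : ∀ n, (pell (n + 2) : ℤ) * pell n = (pell (n + 1) : ℤ) ^ 2 + (-1) ^ (n + 1) := by
  intro n
  induction n with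
  | zero => simp [pell]
  | succ n ih =>
    have h3 : (pell (n + 3) : ℤ) = 2 * pell (n + 2) + pell (n + 1) := by
      show ((2 * pell (n + 2) + pell (n + 1) : ℕ) : ℤ) = _
      push_cast; ring
    have h2 : (pell (n + 2) : ℤ) = 2 * pell (n + 1) + pell n := by
      show ((2 * pell (n + 1) + pell n : ℕ) : ℤ) = _
      push_cast; ring
    show (pell (n + 3) : ℤ) * pell (n+1) = (pell (n + 2):ℤ)^2 + (-1)^(n+2)
    rw [h3]
    have hs : ((-1:ℤ))^(n+2) = -(-1)^(n+1) := by ring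
    rw [hs]
    linear_combination (-(pell (n + 2):ℤ)) * h2 - ih

/-! ### The companion sequence and the Frobenius congruence -/

/-- companion sequence: `(1+√2)^n = pellB n + pell n * √2` -/
def pellB : ℕ → ℕ
  | 0 => 1
  | n + 1 => pellB n + 2 * pell n

lemma pellB_add_pell : ∀ n, pellB n + pell n = pell (n + 1)
  | 0 => rfl
  | n + 1 => by
    have ih := pellB_add_pell n
    show pellB n + 2 * pell n + pell (n + 1) = 2 * pell (n + 1) + pell n
    omega

open Polynomial in
lemma pell_expand (p : ℕ) [Fact p.Prime] :
    ∀ n, (X ^ 2 - 2 : (ZMod p)[X]) ∣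
      (1 + X) ^ n - (C ((pellB n : ZMod p)) + C ((pell n : ZMod p)) * X) := by
  intro n
  induction n with
  | zero => simp [pellB, pell]
  | succ n ih =>
    obtain ⟨q, hq⟩ := ih
    refine ⟨(1 + X) * q + C ((pell n : ZMod p)), ?_⟩
    have hB : ((pellB (n+1) : ZMod p)) = (pellB n : ZMod p) + 2 * (pell n : ZMod p) := by
      show (((pellB n + 2 * pell n : ℕ)) : ZMod p) = _
      push_cast; ring
    have hP : ((pell (n+1) : ZMod p)) = (pellB n : ZMod p) + (pell n : ZMod p) := by
      rw [← pellB_add_pell n]; push_cast; ring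
    rw [hB, hP, map_add, map_add, map_mul, map_ofNat]
    linear_combination (1 + (X : (ZMod p)[X])) * hq

open Polynomial in
lemma pell_card_eq (p : ℕ) [hpf : Fact p.Prime] (hodd : p ≠ 2) :
    ((pell p : ZMod p)) = 2 ^ ((p - 1) / 2) := by
  have hp := hpf.out
  have hfrob : ((1 + X : (ZMod p)[X])) ^ p = 1 + X ^ p := by
    rw [add_pow_char]; simp
  obtain ⟨k, hk⟩ : ∃ k, p = 2 * k + 1 := by
    have := hp.two_le
    refine ⟨(p - 1) / 2, ?_⟩
    have : ¬ (2 ∣ p) := by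
      intro h; exact hodd ((Nat.prime_dvd_prime_iff_eq Nat.prime_two hp).mp h).symm
    omega
  have hkk : (p - 1) / 2 = k := by omega
  have h1 : (X ^ 2 - 2 : (ZMod p)[X]) ∣ X ^ p - C ((2 : ZMod p) ^ k) * X := by
    have : ((X:(ZMod p)[X]) ^ 2 - 2) ∣ ((X ^ 2) ^ k - 2 ^ k) := sub_dvd_pow_sub_pow _ _ k
    obtain ⟨q, hq⟩ := this
    refine ⟨q * X, ?_⟩
    have hXp : (X : (ZMod p)[X]) ^ p = (X ^ 2) ^ k * X := by
      have : (X : (ZMod p)[X]) ^ p = X ^ (2 * k + 1) := congrArg (fun m => X ^ m) hk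
      rw [this, pow_succ, pow_mul]
    rw [hXp]
    have hC : (C ((2:ZMod p) ^ k)) = (2 : (ZMod p)[X]) ^ k := by
      rw [map_pow, map_ofNat]
    rw [hC]
    linear_combination X * hq
  have h2 := pell_expand p p
  rw [hfrob] at h2
  have h3 : (X ^ 2 - 2 : (ZMod p)[X]) ∣
      (C ((pell p : ZMod p) - 2 ^ ((p-1)/2)) * X + C ((pellB p : ZMod p) - 1)) := by
    have := dvd_sub h2 h1
    have he : (1 + X ^ p - (C ((pellB p : ZMod p)) + C ((pell p : ZMod p)) * X)) -
        (X ^ p - C ((2 : ZMod p) ^ k) * X) =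
        -(C ((pell p : ZMod p) - 2 ^ ((p-1)/2)) * X + C ((pellB p : ZMod p) - 1)) := by
      rw [hkk, map_sub, map_sub, map_pow, map_ofNat, map_one]
      ring
    rw [he] at this
    exact (dvd_neg).mp this
  have hdeg : (C ((pell p : ZMod p) - 2 ^ ((p-1)/2)) * X + C ((pellB p : ZMod p) - 1) : (ZMod p)[X]) = 0 := by
    refine Polynomial.eq_zero_of_dvd_of_degree_lt h3 ?_
    have hd2 : (X ^ 2 - 2 : (ZMod p)[X]).degree = 2 := by
      have : (2 : (ZMod p)[X]) = C 2 := by rw [map_ofNat]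
      rw [this]
      exact degree_X_pow_sub_C (by norm_num) 2
    rw [hd2]
    exact lt_of_le_of_lt (degree_linear_le) (by norm_num)
  rw [sub_eq_zero.symm]
  generalize hA : ((pell p : ZMod p) - 2 ^ ((p-1)/2)) = A at hdeg ⊢
  have := congrArg (fun q => Polynomial.coeff q 1) hdeg
  simpa [coeff_C, Polynomial.coeff_one] using this

/-! ### The order of appearance -/

lemma pellOrder_dvd (p : ℕ) (hp : p.Prime)
    (hne : {k : ℕ | 0 < k ∧ p ∣ pell k}.Nonempty) :
    ∀ n, p ∣ pell n → pellOrder p ∣ n := by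
  have hz : pellOrder p ∈ {k : ℕ | 0 < k ∧ p ∣ pell k} := Nat.sInf_mem hne
  obtain ⟨hzpos, hzdvd⟩ := hz
  intro n
  induction n using Nat.strong_induction_on with
  | _ n ih =>
    intro hn
    rcases Nat.eq_zero_or_pos n with h0 | hnpos
    · simp [h0]
    have hle : pellOrder p ≤ n := Nat.sInf_le ⟨hnpos, hn⟩
    rcases Nat.lt_or_ge n (pellOrder p + 1) with h | h
    · have : n = pellOrder p := by omega
      simp [this]
    · set z := pellOrder p with hzdef
      set m := n - z with hm
      have hmz : n = (m - 1) + z + 1 := by omega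
      have hadd := pell_add (m - 1) z
      rw [← hmz] at hadd
      have hdvd2 : p ∣ pell m * pell (z + 1) := by
        have hm1 : m - 1 + 1 = m := by omega
        rw [hm1] at hadd
        have : p ∣ pell m * pell (z + 1) + pell (m - 1) * pell z := hadd ▸ hn
        exact (Nat.dvd_add_right (Dvd.dvd.mul_left hzdvd _)).mp (by rwa [Nat.add_comm] at this)
      have hnz : ¬ p ∣ pell (z + 1) := by
        intro hbad
        have := Nat.dvd_gcd hzdvd hbad
        rw [pell_coprime z] at this
        have h1 := Nat.le_of_dvd one_pos this
        have h2 := hp.two_le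
        omega
      have hpm : p ∣ pell m := by
        rcases (hp.dvd_mul.mp hdvd2) with h1 | h1
        · exact h1
        · exact absurd h1 hnz
      have hmlt : m < n := by omega
      have := ih m hmlt hpm
      have : z ∣ m + z := Nat.dvd_add this dvd_rfl
      rwa [show m + z = n by omega] at this

/-! ### Real bounds -/

lemma sqrt_two_ge_one : (1:ℝ) ≤ Real.sqrt 2 := by
  nlinarith [Real.sq_sqrt (by norm_num : (2:ℝ) ≥ 0), Real.sqrt_nonneg 2]

lemma alpha_sq : (1 + Real.sqrt 2) ^ 2 = 2 * (1 + Real.sqrt 2) + 1 := by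
  have := Real.sq_sqrt (by norm_num : (2:ℝ) ≥ 0)
  nlinarith [this]

lemma pell_le_alpha : ∀ n, (pell (n + 1) : ℝ) ≤ (1 + Real.sqrt 2) ^ n := by
  have key : ∀ n, ((pell (n + 1) : ℝ) ≤ (1 + Real.sqrt 2) ^ n) ∧
      ((pell (n + 2) : ℝ) ≤ (1 + Real.sqrt 2) ^ (n + 1)) := by
    intro n
    induction n with
    | zero =>
      constructor
      · simp [pell]
      · show ((2 * pell 1 + pell 0 : ℕ) : ℝ) ≤ _
        simp [pell]
        nlinarith [sqrt_two_ge_one]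
    | succ n ih =>
      refine ⟨ih.2, ?_⟩
      show ((2 * pell (n + 2) + pell (n + 1) : ℕ) : ℝ) ≤ _
      push_cast
      have h1 := ih.1
      have h2 := ih.2
      have e : (1 + Real.sqrt 2) ^ (n + 2) = (1 + Real.sqrt 2) ^ n * (1 + Real.sqrt 2) ^ 2 := by
        ring
      rw [e, alpha_sq]
      have hpow : (0:ℝ) ≤ (1 + Real.sqrt 2) ^ n := by positivity
      have := sqrt_two_ge_one
      calc (2 * (pell (n + 2) : ℝ) + pell (n + 1))
          ≤ 2 * ((1 + Real.sqrt 2) ^ (n+1)) + (1 + Real.sqrt 2) ^ n := by nlinarith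
        _ = (1 + Real.sqrt 2) ^ n * (2 * (1 + Real.sqrt 2) + 1) := by ring
  exact fun n => (key n).1

lemma pell_le_alpha' : ∀ n, (pell n : ℝ) ≤ (1 + Real.sqrt 2) ^ n
  | 0 => by simp [pell]
  | n + 1 => by
    refine le_trans (pell_le_alpha n) ?_
    have : (1:ℝ) ≤ 1 + Real.sqrt 2 := by nlinarith [sqrt_two_ge_one]
    exact pow_le_pow_right₀ this (by omega)

/-- For every prime `p`, with `z(p)` the order of appearance of `p` in the
Pell sequence and `e_p = ν_p(P_{z(p)})`, we have
`e_p ≤ (p + 1)·log α / (2·log p)` where `α = 1 + √2`. -/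
theorem pell_entry_valuation_bound (p : ℕ) (hp : p.Prime) :
    ((pell (pellOrder p)).factorization p : ℝ) ≤
      ((p : ℝ) + 1) * Real.log (1 + Real.sqrt 2) / (2 * Real.log p) := by
  haveI : Fact p.Prime := ⟨hp⟩
  set a : ℝ := 1 + Real.sqrt 2 with ha
  have ha1 : (1:ℝ) ≤ a := by nlinarith [sqrt_two_ge_one]
  have ha2 : (2:ℝ) ≤ a := by nlinarith [sqrt_two_ge_one]
  rcases eq_or_ne p 2 with h2 | hodd
  · -- p = 2
    subst h2
    have hmem : (2:ℕ) ∈ {k : ℕ | 0 < k ∧ 2 ∣ pell k} := ⟨two_pos, by simp [pell]⟩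
    have hz : pellOrder 2 = 2 := by
      have hle : pellOrder 2 ≤ 2 := Nat.sInf_le hmem
      have hmm : 0 < pellOrder 2 ∧ 2 ∣ pell (pellOrder 2) :=
        Nat.sInf_mem (⟨2, hmem⟩ : {k : ℕ | 0 < k ∧ 2 ∣ pell k}.Nonempty)
      obtain ⟨hpos, hdvd⟩ := hmm
      interval_cases h : (pellOrder 2)
      · simp [pell] at hdvd
      · rfl
    rw [hz, show pell 2 = 2 from rfl, Nat.Prime.factorization_self Nat.prime_two]
    have hl2 : 0 < Real.log 2 := Real.log_pos (by norm_num)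
    have hla : Real.log 2 ≤ Real.log a := Real.log_le_log (by norm_num) ha2
    rw [le_div_iff₀ (by positivity)]
    push_cast
    nlinarith [hl2, hla]
  · -- p odd
    have hp2 : 2 < p := lt_of_le_of_ne hp.two_le (Ne.symm hodd)
    have hpodd : ¬ (2 ∣ p) := by
      intro h
      exact hodd ((Nat.prime_dvd_prime_iff_eq Nat.prime_two hp).mp h).symm
    -- (pell p)^2 ≡ 1 mod p
    have hsq : ((pell p : ZMod p)) ^ 2 = 1 := by
      rw [pell_card_eq p hodd, ← pow_mul]
      have he : (p - 1) / 2 * 2 = p - 1 := by omega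
      rw [he]
      have h2ne : (2 : ZMod p) ≠ 0 := by
        have : ((2:ℕ) : ZMod p) ≠ 0 := by
          rw [Ne, ZMod.natCast_eq_zero_iff]
          intro h
          have := Nat.le_of_dvd two_pos h
          omega
        simpa using this
      exact ZMod.pow_card_sub_one_eq_one h2ne
    have hZdvd : (p:ℤ) ∣ (pell p : ℤ) ^ 2 - 1 := by
      have : (((pell p : ℤ) ^ 2 - 1 : ℤ) : ZMod p) = 0 := by
        push_cast
        rw [hsq]; ring
      exact (ZMod.intCast_zmod_eq_zero_iff_dvd _ _).mp this
    have hc := pell_catalan (p - 1)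
    have e1 : p - 1 + 2 = p + 1 := by omega
    have e2 : p - 1 + 1 = p := by omega
    rw [e1, e2] at hc
    have hsign : ((-1:ℤ)) ^ p = -1 := Odd.neg_one_pow (hp.odd_of_ne_two hodd)
    rw [hsign] at hc
    have hdvdmul : (p:ℤ) ∣ (pell (p+1) : ℤ) * (pell (p-1) : ℤ) := by
      have he3 : (pell (p+1) : ℤ) * (pell (p-1) : ℤ) = (pell p : ℤ) ^ 2 - 1 := by
        rw [hc]; ring
      rw [he3]
      exact hZdvd
    have hpint : Prime (p:ℤ) := Nat.prime_iff_prime_int.mp hp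
    have hdor : p ∣ pell (p - 1) ∨ p ∣ pell (p + 1) := by
      rcases hpint.dvd_mul.mp hdvdmul with h | h
      · right; exact_mod_cast h
      · left; exact_mod_cast h
    have hne : {k : ℕ | 0 < k ∧ p ∣ pell k}.Nonempty := by
      rcases hdor with h | h
      · exact ⟨p - 1, ⟨by omega, h⟩⟩
      · exact ⟨p + 1, ⟨by omega, h⟩⟩
    set z := pellOrder p with hzd
    have hzmem : 0 < z ∧ p ∣ pell z := Nat.sInf_mem hne
    obtain ⟨hzpos, hzdvd⟩ := hzmem
    have hzor : z ∣ p - 1 ∨ z ∣ p + 1 := by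
      rcases hdor with h | h
      · left; exact pellOrder_dvd p hp hne _ h
      · right; exact pellOrder_dvd p hp hne _ h
    have hzle : z ≤ p + 1 := by
      rcases hzor with h | h
      · have := Nat.le_of_dvd (by omega) h; omega
      · exact Nat.le_of_dvd (by omega) h
    set e := (pell z).factorization p with hed
    have hpe : p ^ e ∣ pell z := Nat.ordProj_dvd _ _
    have hmin : ∀ m, 0 < m → m < z → ¬ p ∣ pell m := by
      intro m hm1 hm2 hdv
      have hle2 : z ≤ m := Nat.sInf_le ⟨hm1, hdv⟩
      omega
    -- key inequality
    have key : ((p:ℝ)) ^ (2 * e) ≤ a ^ (p + 1) := by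
      rcases Nat.even_or_odd z with hev | hod
      · -- z even
        obtain ⟨k, hk⟩ := hev
        obtain ⟨j, hj⟩ : ∃ j, k = j + 1 := ⟨k - 1, by omega⟩
        have hzj : z = 2 * j + 2 := by omega
        have hfac : pell z = pell (j + 1) * (2 * (pell (j + 1) + pell j)) := by
          have h := pell_add j (j + 1)
          have hidx : j + (j + 1) + 1 = z := by omega
          rw [hidx] at h
          rw [h, show pell (j + 1 + 1) = 2 * pell (j + 1) + pell j from rfl]
          ring
        have hnd : ¬ p ∣ pell (j + 1) := hmin (j + 1) (by omega) (by omega)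
        have cop1 : Nat.Coprime (p ^ e) (pell (j + 1)) :=
          Nat.Coprime.pow_left _ ((hp.coprime_iff_not_dvd).mpr hnd)
        have hS : p ^ e ∣ 2 * (pell (j + 1) + pell j) := by
          refine cop1.dvd_of_dvd_mul_left ?_
          rwa [← hfac]
        have cop2 : Nat.Coprime (p ^ e) 2 := by
          refine Nat.Coprime.pow_left _ ((hp.coprime_iff_not_dvd).mpr ?_)
          intro h
          have := Nat.le_of_dvd two_pos h
          omega
        have hS2 : p ^ e ∣ pell (j + 1) + pell j := cop2.dvd_of_dvd_mul_left hS
        have hle : p ^ e ≤ pell (j + 1) + pell j := by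
          refine Nat.le_of_dvd ?_ hS2
          have := pell_pos j
          omega
        have hler : ((p:ℝ)) ^ e ≤ a ^ (j + 1) := by
          have h1 : ((p ^ e : ℕ) : ℝ) ≤ ((pell (j + 1) + pell j : ℕ) : ℝ) := by
            exact_mod_cast hle
          push_cast at h1
          have h2 := pell_le_alpha j
          have h3 := pell_le_alpha' j
          have hpow : (0:ℝ) ≤ a ^ j := by positivity
          calc ((p:ℝ)) ^ e ≤ (pell (j + 1) : ℝ) + pell j := h1
            _ ≤ a ^ j + a ^ j := by linarith
            _ = 2 * a ^ j := by ring
            _ ≤ a * a ^ j := by nlinarith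
            _ = a ^ (j + 1) := by ring
        have hsq2 : ((p:ℝ)) ^ (2 * e) ≤ a ^ (2 * j + 2) := by
          have hp0 : (0:ℝ) ≤ ((p:ℝ)) ^ e := by positivity
          calc ((p:ℝ)) ^ (2 * e) = (((p:ℝ)) ^ e) ^ 2 := by rw [← pow_mul]; ring_nf
            _ ≤ (a ^ (j + 1)) ^ 2 := by nlinarith
            _ = a ^ (2 * j + 2) := by rw [← pow_mul]; ring_nf
        refine le_trans hsq2 (pow_le_pow_right₀ ha1 (by omega))
      · -- z odd
        have h2z : 2 * z ≤ p + 1 := by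
          rcases hzor with h | h
          · obtain ⟨c, hc2⟩ := h
            have hcne : c ≠ 0 := by
              intro h0
              rw [h0, Nat.mul_zero] at hc2
              omega
            have hceven : 2 ∣ c := by
              rcases Nat.even_or_odd c with hce | hco
              · exact hce.two_dvd
              · exfalso
                have : Odd (z * c) := hod.mul hco
                rw [← hc2] at this
                rw [Nat.odd_iff] at this
                omega
            obtain ⟨c', hc'⟩ := hceven
            have hdd : 2 * z ∣ z * c := ⟨c', by rw [hc']; ring⟩
            rw [← hc2] at hdd
            have := Nat.le_of_dvd (by omega) hdd
            omega
          · obtain ⟨c, hc2⟩ := h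
            have hcne : c ≠ 0 := by
              intro h0
              rw [h0, Nat.mul_zero] at hc2
              omega
            have hceven : 2 ∣ c := by
              rcases Nat.even_or_odd c with hce | hco
              · exact hce.two_dvd
              · exfalso
                have : Odd (z * c) := hod.mul hco
                rw [← hc2] at this
                rw [Nat.odd_iff] at this
                omega
            obtain ⟨c', hc'⟩ := hceven
            have hdd : 2 * z ∣ z * c := ⟨c', by rw [hc']; ring⟩
            rw [← hc2] at hdd
            have := Nat.le_of_dvd (by omega) hdd
            omega
        have hle : p ^ e ≤ pell z := by
          refine Nat.le_of_dvd ?_ hpe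
          obtain ⟨w, hw⟩ : ∃ w, z = w + 1 := ⟨z - 1, by omega⟩
          rw [hw]; exact pell_pos w
        have hler : ((p:ℝ)) ^ e ≤ a ^ (z - 1) := by
          have h1 : ((p ^ e : ℕ) : ℝ) ≤ ((pell z : ℕ) : ℝ) := by exact_mod_cast hle
          push_cast at h1
          obtain ⟨w, hw⟩ : ∃ w, z = w + 1 := ⟨z - 1, by omega⟩
          have := pell_le_alpha w
          rw [hw] at h1 ⊢
          simpa using le_trans h1 this
        have hsq2 : ((p:ℝ)) ^ (2 * e) ≤ a ^ (2 * (z - 1)) := by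
          have hp0 : (0:ℝ) ≤ ((p:ℝ)) ^ e := by positivity
          have hpow : (0:ℝ) ≤ a ^ (z - 1) := by positivity
          calc ((p:ℝ)) ^ (2 * e) = (((p:ℝ)) ^ e) ^ 2 := by rw [← pow_mul]; ring_nf
            _ ≤ (a ^ (z - 1)) ^ 2 := by nlinarith
            _ = a ^ (2 * (z - 1)) := by rw [← pow_mul]; ring_nf
        refine le_trans hsq2 (pow_le_pow_right₀ ha1 (by omega))
    -- from key, take logarithms
    have hppos : (0:ℝ) < (p:ℝ) ^ (2 * e) := by
      have : (0:ℝ) < (p:ℝ) := by exact_mod_cast hp.pos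
      positivity
    have hlog := Real.log_le_log hppos key
    rw [Real.log_pow, Real.log_pow] at hlog
    have hlp : 0 < Real.log p := Real.log_pos (by exact_mod_cast hp.one_lt)
    rw [le_div_iff₀ (by positivity)]
    push_cast at hlog ⊢
    linarith
end

section
/- If m and n are positive integers satisfying φ(5^m − 1) = 5^n − 1, then m and n are not coprime, i.e., gcd(m, n) > 1. -/
open Nat

-- cast of 5^k - 1 into ZMod p
lemma cast_pow_sub_one (p k : ℕ) : ((5 ^ k - 1 : ℕ) : ZMod p) = (5 : ZMod p) ^ k - 1 := by
  have h1 : 1 ≤ 5 ^ k := Nat.one_le_pow _ _ (by norm_num)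
  push_cast [Nat.cast_sub h1]
  ring

-- a common prime divisor of 5^m-1 and 5^n-1 with gcd m n = 1 divides 4
lemma common_dvd_four {p m n : ℕ} (hp : p.Prime) (hg : Nat.gcd m n = 1)
    (h1 : p ∣ 5 ^ m - 1) (h2 : p ∣ 5 ^ n - 1) : p ∣ 4 := by
  haveI : Fact p.Prime := ⟨hp⟩
  have e1 : (5 : ZMod p) ^ m = 1 := by
    have := (ZMod.natCast_eq_zero_iff _ p).mpr h1
    rw [cast_pow_sub_one] at this
    linear_combination this
  have e2 : (5 : ZMod p) ^ n = 1 := by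
    have := (ZMod.natCast_eq_zero_iff _ p).mpr h2
    rw [cast_pow_sub_one] at this
    linear_combination this
  have := (pow_gcd_eq_one (a := (5 : ZMod p))).mpr ⟨e1, e2⟩
  rw [hg, pow_one] at this
  have : ((4 : ℕ) : ZMod p) = 0 := by push_cast; linear_combination this
  exact (ZMod.natCast_eq_zero_iff _ p).mp this

lemma zmod5_square (x : ZMod 5) (h : IsSquare x) (h0 : x ≠ 0) (h1 : x ≠ 1) : x = 4 := by
  revert h h0 h1
  revert x
  decide

-- every odd prime divisor p of 5^m-1 (m odd) with 5 ∤ p-1 satisfies p % 5 = 4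
lemma prime_divisor_mod_five {p m : ℕ} (hp : p.Prime) (hp2 : p ≠ 2) (hm : Odd m)
    (hdvd : p ∣ 5 ^ m - 1) (h5 : ¬ (5 ∣ p - 1)) : p % 5 = 4 := by
  haveI : Fact p.Prime := ⟨hp⟩
  have hp5 : p ≠ 5 := by
    rintro rfl
    have : (5:ℕ) ∣ 5 ^ m - 1 := hdvd
    have h1 : 1 ≤ 5 ^ m := Nat.one_le_pow _ _ (by norm_num)
    have h5m : (5:ℕ) ∣ 5 ^ m := dvd_pow_self 5 hm.pos.ne'
    omega
  have e1 : (5 : ZMod p) ^ m = 1 := by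
    have := (ZMod.natCast_eq_zero_iff _ p).mpr hdvd
    rw [cast_pow_sub_one] at this
    linear_combination this
  -- 5 is a square mod p
  have hsq : IsSquare (5 : ZMod p) := by
    obtain ⟨k, hk⟩ := hm
    refine ⟨(5 : ZMod p) ^ (k + 1), ?_⟩
    have h51 : (5 : ZMod p) ^ (m + 1) = 5 := by rw [pow_succ, e1, one_mul]
    calc (5 : ZMod p) = 5 ^ (m + 1) := h51.symm
      _ = 5 ^ (k + 1) * 5 ^ (k + 1) := by rw [← pow_add]; congr 1; omega
  haveI : Fact (Nat.Prime 5) := ⟨by norm_num⟩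
  have hsq5 : IsSquare ((p : ZMod 5)) := by
    have := (ZMod.exists_sq_eq_prime_iff_of_mod_four_eq_one (p := 5) (q := p)
      (by norm_num) hp2)
    apply this.mpr
    exact_mod_cast hsq
  -- p mod 5 ∈ {1, 4}, and ≠ 0, ≠ 1
  have hne0 : (p : ZMod 5) ≠ 0 := by
    rw [Ne, ZMod.natCast_eq_zero_iff]
    intro hd
    exact hp5 ((Nat.prime_dvd_prime_iff_eq (by norm_num) hp).mp hd).symm
  have hne1 : (p : ZMod 5) ≠ 1 := by
    intro h1
    apply h5
    have hp1 : 1 ≤ p := hp.one_lt.le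
    have : ((p - 1 : ℕ) : ZMod 5) = 0 := by
      rw [Nat.cast_sub hp1, h1]; simp
    exact (ZMod.natCast_eq_zero_iff _ 5).mp this
  have h4 : (p : ZMod 5) = 4 := zmod5_square _ hsq5 hne0 hne1
  have := ZMod.val_natCast (n := 5) p
  rw [h4] at this
  rw [← this]; rfl


lemma squarefree_prod_mod5 : ∀ u : ℕ, Squarefree u →
    (∀ p, p.Prime → p ∣ u → p % 5 = 4) →
    ((Nat.totient u : ZMod 5)) ^ 2 * (u : ZMod 5) = 1 := by
  intro u
  induction u using Nat.strong_induction_on with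
  | _ u ih =>
    intro hsf hp
    have hu0 : u ≠ 0 := hsf.ne_zero
    rcases eq_or_lt_of_le (Nat.one_le_iff_ne_zero.mpr hu0) with h1 | h1
    · rw [← h1]; simp
    · set p := u.minFac with hpdef
      have hpp : p.Prime := Nat.minFac_prime (by omega)
      have hpd : p ∣ u := Nat.minFac_dvd u
      obtain ⟨v, hv⟩ := hpd
      have hpdvd : p ∣ u := ⟨v, hv⟩
      have hvne : v ≠ 0 := by rintro rfl; simp [hv] at hu0
      have hpv : ¬ p ∣ v := by
        rintro ⟨w, rfl⟩
        exact hpp.not_isUnit (hsf p ⟨w, by rw [hv]; ring⟩)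
      have hcop : Nat.Coprime p v := (Nat.Prime.coprime_iff_not_dvd hpp).mpr hpv
      have hvlt : v < u := by
        have h2v : 2 * v ≤ p * v := Nat.mul_le_mul_right v hpp.two_le
        rw [hv]
        calc v < 2 * v := by omega
          _ ≤ p * v := h2v
      have hvsf : Squarefree v := hsf.squarefree_of_dvd ⟨p, by rw [hv]; ring⟩
      have hvp : ∀ q, q.Prime → q ∣ v → q % 5 = 4 := fun q hq hqd =>
        hp q hq (hqd.trans ⟨p, by rw [hv]; ring⟩)
      have ihv := ih v hvlt hvsf hvp
      have hp5 : p % 5 = 4 := hp p hpp hpdvd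
      obtain ⟨t, ht⟩ : ∃ t, p = 5 * t + 4 := ⟨p / 5, by omega⟩
      have h50 : (5 : ZMod 5) = 0 := by decide
      have h4 : (p : ZMod 5) = 4 := by
        rw [ht]; push_cast; rw [h50]; ring
      have h3 : ((p - 1 : ℕ) : ZMod 5) = 3 := by
        have : p - 1 = 5 * t + 3 := by omega
        rw [this]; push_cast; rw [h50]; ring
      have htot : Nat.totient u = (p - 1) * Nat.totient v := by
        rw [hv, Nat.totient_mul hcop, Nat.totient_prime hpp]
      rw [htot, hv]
      push_cast
      rw [h3, h4]
      linear_combination (36 : ZMod 5) * ihv + 7 * h50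
/-- If `m` and `n` are positive integers with `φ(5^m − 1) = 5^n − 1`, then
`m` and `n` are not coprime, i.e. `gcd(m, n) > 1`. -/
theorem totient_five_pow_not_coprime (m n : ℕ) (hm : 0 < m) (hn : 0 < n)
    (h : Nat.totient (5 ^ m - 1) = 5 ^ n - 1) :
    1 < Nat.gcd m n := by
  by_contra hg
  push_neg at hg
  have hg1 : Nat.gcd m n = 1 := by
    have := Nat.gcd_pos_of_pos_left n hm
    omega
  have hN1 : 1 ≤ 5 ^ m := Nat.one_le_pow _ _ (by norm_num)
  have hn1 : 1 ≤ 5 ^ n := Nat.one_le_pow _ _ (by norm_num)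
  have hn5 : 5 ≤ 5 ^ n := Nat.le_self_pow hn.ne' 5
  have hm5 : 5 ≤ 5 ^ m := Nat.le_self_pow hm.ne' 5
  have h5n : ¬ (5 ∣ 5 ^ n - 1) := by
    have : (5:ℕ) ∣ 5 ^ n := dvd_pow_self 5 hn.ne'
    omega
  rcases Nat.even_or_odd m with hme | hmo
  · -- m even, so n odd
    have hno : Odd n := by
      rcases Nat.even_or_odd n with hne | hno
      · exfalso
        have : 2 ∣ Nat.gcd m n := Nat.dvd_gcd hme.two_dvd hne.two_dvd
        omega
      · exact hno
    obtain ⟨k, hk⟩ := hme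
    have h5m : (5:ℕ) ^ m = 25 ^ k := by
      rw [show m = 2 * k by omega, pow_mul]; norm_num
    have h25_8 : (25:ℕ) ^ k % 8 = 1 := by
      have := Nat.ModEq.pow k (show (25:ℕ) ≡ 1 [MOD 8] by decide)
      simpa [Nat.ModEq] using this
    have h25_3 : (25:ℕ) ^ k % 3 = 1 := by
      have := Nat.ModEq.pow k (show (25:ℕ) ≡ 1 [MOD 3] by decide)
      simpa [Nat.ModEq] using this
    have h8 : (8:ℕ) ∣ 5 ^ m - 1 := by omega
    have h3 : (3:ℕ) ∣ 5 ^ m - 1 := by omega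
    have h24 : (24:ℕ) ∣ 5 ^ m - 1 := by
      have := (Nat.coprime_primes (by norm_num) (by norm_num)).mpr (by norm_num : (3:ℕ) ≠ 2)
      have hc : Nat.Coprime 8 3 := by decide
      exact (show (24:ℕ) = 8 * 3 by norm_num) ▸ hc.mul_dvd_of_dvd_of_dvd h8 h3
    have hphi : (8:ℕ) ∣ 5 ^ n - 1 := by
      have := Nat.totient_dvd_of_dvd h24
      rw [h, show Nat.totient 24 = 8 by decide] at this
      exact this
    obtain ⟨j, hj⟩ := hno
    have h5nn : (5:ℕ) ^ n = 5 * 25 ^ j := by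
      rw [show n = 2 * j + 1 by omega, pow_succ, pow_mul]; norm_num; ring
    have h25j : (25:ℕ) ^ j % 8 = 1 := by
      have := Nat.ModEq.pow j (show (25:ℕ) ≡ 1 [MOD 8] by decide)
      simpa [Nat.ModEq] using this
    omega
  · -- m odd
    obtain ⟨k, hk⟩ := hmo
    have h5m : (5:ℕ) ^ m = 5 * 25 ^ k := by
      rw [show m = 2 * k + 1 by omega, pow_succ, pow_mul]; norm_num; ring
    have h25k : (25:ℕ) ^ k % 8 = 1 := by
      have := Nat.ModEq.pow k (show (25:ℕ) ≡ 1 [MOD 8] by decide)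
      simpa [Nat.ModEq] using this
    have hNmod : (5 ^ m - 1) % 8 = 4 := by omega
    have hNu : 5 ^ m - 1 = 4 * ((5 ^ m - 1) / 4) := by omega
    set u := (5 ^ m - 1) / 4 with hudef
    have huodd : u % 2 = 1 := by omega
    have hund : ¬ 2 ∣ u := by omega
    -- u is squarefree
    have husf : Squarefree u := by
      rw [Nat.squarefree_iff_prime_squarefree]
      intro p hpp hdd
      have hpu : p ∣ u := (dvd_mul_right p p).trans hdd
      have hp2 : p ≠ 2 := by rintro rfl; exact hund hpu
      have hpN : p ∣ 5 ^ m - 1 := hpu.trans ⟨4, by omega⟩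
      have hppN : p * p ∣ 5 ^ m - 1 := hdd.trans ⟨4, by omega⟩
      obtain ⟨w, hw⟩ := hpN
      have hpw : p ∣ w := by
        have hp0 : 0 < p := hpp.pos
        rcases hppN with ⟨c, hc⟩
        have : p * w = p * (p * c) := by rw [← hw, hc]; ring
        exact ⟨c, by exact Nat.eq_of_mul_eq_mul_left hp0 this⟩
      have hphiN : p ∣ Nat.totient (5 ^ m - 1) := by
        rw [hw, Nat.totient_mul_of_prime_of_dvd hpp hpw]
        exact dvd_mul_right p _
      rw [h] at hphiN
      have hp4 := common_dvd_four hpp hg1 ⟨w, hw⟩ hphiN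
      have hp2' : p ∣ 2 := hpp.dvd_of_dvd_pow (show p ∣ 2 ^ 2 by norm_num [hp4])
      exact hp2 ((Nat.prime_dvd_prime_iff_eq hpp Nat.prime_two).mp hp2')
    -- every prime divisor of u is ≡ 4 mod 5
    have hprimes : ∀ q, q.Prime → q ∣ u → q % 5 = 4 := by
      intro q hq hqu
      have hq2 : q ≠ 2 := by rintro rfl; exact hund hqu
      have hqN : q ∣ 5 ^ m - 1 := hqu.trans ⟨4, by omega⟩
      have hq51 : ¬ (5 ∣ q - 1) := by
        intro h51
        apply h5n
        have := Nat.totient_dvd_of_dvd hqN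
        rw [h, Nat.totient_prime hq] at this
        exact h51.trans this
      exact prime_divisor_mod_five hq hq2 ⟨k, by omega⟩ hqN hq51
    have key := squarefree_prod_mod5 u husf hprimes
    -- totient of N
    have hcop4 : Nat.Coprime 4 u := by
      have h2u : Nat.Coprime 2 u := (Nat.Prime.coprime_iff_not_dvd Nat.prime_two).mpr hund
      exact (show (4:ℕ) = 2 ^ 2 by norm_num) ▸ h2u.pow_left 2
    have htotN : Nat.totient (5 ^ m - 1) = 2 * Nat.totient u := by
      rw [hNu, Nat.totient_mul hcop4, show Nat.totient 4 = 2 by decide]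
    -- cast everything to ZMod 5
    have hcast1 : ((5 ^ n - 1 : ℕ) : ZMod 5) = 4 := by
      rw [cast_pow_sub_one]
      rw [show (5 : ZMod 5) = 0 by decide, zero_pow hn.ne']
      decide
    have hcast2 : ((5 ^ m - 1 : ℕ) : ZMod 5) = 4 := by
      rw [cast_pow_sub_one]
      rw [show (5 : ZMod 5) = 0 by decide, zero_pow hm.ne']
      decide
    have hphi5 : ((Nat.totient u : ℕ) : ZMod 5) = 2 := by
      have e : ((2 * Nat.totient u : ℕ) : ZMod 5) = 4 := by
        rw [← htotN, h, hcast1]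
      push_cast at e
      exact (by decide : ∀ x : ZMod 5, 2 * x = 4 → x = 2) _ e
    have hu5 : ((u : ℕ) : ZMod 5) = 1 := by
      have e : ((4 * u : ℕ) : ZMod 5) = 4 := by rw [← hNu, hcast2]
      push_cast at e
      exact (by decide : ∀ x : ZMod 5, 4 * x = 4 → x = 1) _ e
    rw [hphi5, hu5] at key
    exact absurd key (by decide)
end

section
/- If m and n are positive integers satisfying φ(5^m − 1) = 5^n − 1, and q is a prime with q < 10^4 and q ∣ m, then q ∣ n. -/
/-- Binary modular exponentiation with fuel (kernel-reduction friendly). -/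
def pmAux : ℕ → ℕ → ℕ → ℕ → ℕ
  | 0, _, _, m => 1 % m
  | f+1, b, e, m =>
    if e = 0 then 1 % m
    else if e % 2 = 0 then pmAux f b (e/2) m * pmAux f b (e/2) m % m
    else b * (pmAux f b (e/2) m * pmAux f b (e/2) m) % m

lemma pmAux_eq : ∀ f b e m : ℕ, e < 2 ^ f → pmAux f b e m = b ^ e % m := by
  intro f
  induction f with
  | zero =>
    intro b e m he
    interval_cases e
    simp [pmAux]
  | succ f ih =>
    intro b e m he
    rcases Nat.eq_zero_or_pos e with rfl | he0
    · simp [pmAux]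
    · have h2 : e / 2 < 2 ^ f := by
        rw [pow_succ] at he; omega
      have hrec := ih b (e/2) m h2
      have hmm : b ^ (e/2) % m ≡ b ^ (e/2) [MOD m] := Nat.mod_modEq _ _
      by_cases hpar : e % 2 = 0
      · have hsplit : e / 2 + e / 2 = e := by omega
        have h1 : pmAux (f+1) b e m = b ^ (e/2) % m * (b ^ (e/2) % m) % m := by
          rw [pmAux, if_neg (by omega), if_pos hpar, hrec]
        have hme : b ^ (e/2) % m * (b ^ (e/2) % m) ≡ b ^ (e/2) * b ^ (e/2) [MOD m] :=
          Nat.ModEq.mul hmm hmm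
        rw [h1, hme, ← pow_add, hsplit]
      · have hsplit : e / 2 + e / 2 + 1 = e := by omega
        have h1 : pmAux (f+1) b e m = b * (b ^ (e/2) % m * (b ^ (e/2) % m)) % m := by
          rw [pmAux, if_neg (by omega), if_neg hpar, hrec]
        have hme : b * (b ^ (e/2) % m * (b ^ (e/2) % m)) ≡
            b * (b ^ (e/2) * b ^ (e/2)) [MOD m] :=
          Nat.ModEq.mul_left b (Nat.ModEq.mul hmm hmm)
        rw [h1, hme]
        congr 1
        rw [← pow_add, mul_comm, ← pow_succ, hsplit]

/-- The key computational predicate: non-Wieferich-base-5 condition. -/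
def Pnw (x : ℕ) : Prop := x % 2 = 1 → x ≠ 1 → x ≠ 5 → pmAux 14 5 (x - 1) (x * x) ≠ 1

instance (x : ℕ) : Decidable (Pnw x) := by unfold Pnw; infer_instance

set_option maxRecDepth 10000 in
lemma Pnw0 : ∀ r < 500, Pnw (500 * 0 + r) := by decide
set_option maxRecDepth 10000 in
lemma Pnw1 : ∀ r < 500, Pnw (500 * 1 + r) := by decide
set_option maxRecDepth 10000 in
lemma Pnw2 : ∀ r < 500, Pnw (500 * 2 + r) := by decide
set_option maxRecDepth 10000 in
lemma Pnw3 : ∀ r < 500, Pnw (500 * 3 + r) := by decide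
set_option maxRecDepth 10000 in
lemma Pnw4 : ∀ r < 500, Pnw (500 * 4 + r) := by decide
set_option maxRecDepth 10000 in
lemma Pnw5 : ∀ r < 500, Pnw (500 * 5 + r) := by decide
set_option maxRecDepth 10000 in
lemma Pnw6 : ∀ r < 500, Pnw (500 * 6 + r) := by decide
set_option maxRecDepth 10000 in
lemma Pnw7 : ∀ r < 500, Pnw (500 * 7 + r) := by decide
set_option maxRecDepth 10000 in
lemma Pnw8 : ∀ r < 500, Pnw (500 * 8 + r) := by decide
set_option maxRecDepth 10000 in
lemma Pnw9 : ∀ r < 500, Pnw (500 * 9 + r) := by decide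
set_option maxRecDepth 10000 in
lemma Pnw10 : ∀ r < 500, Pnw (500 * 10 + r) := by decide
set_option maxRecDepth 10000 in
lemma Pnw11 : ∀ r < 500, Pnw (500 * 11 + r) := by decide
set_option maxRecDepth 10000 in
lemma Pnw12 : ∀ r < 500, Pnw (500 * 12 + r) := by decide
set_option maxRecDepth 10000 in
lemma Pnw13 : ∀ r < 500, Pnw (500 * 13 + r) := by decide
set_option maxRecDepth 10000 in
lemma Pnw14 : ∀ r < 500, Pnw (500 * 14 + r) := by decide
set_option maxRecDepth 10000 in
lemma Pnw15 : ∀ r < 500, Pnw (500 * 15 + r) := by decide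
set_option maxRecDepth 10000 in
lemma Pnw16 : ∀ r < 500, Pnw (500 * 16 + r) := by decide
set_option maxRecDepth 10000 in
lemma Pnw17 : ∀ r < 500, Pnw (500 * 17 + r) := by decide
set_option maxRecDepth 10000 in
lemma Pnw18 : ∀ r < 500, Pnw (500 * 18 + r) := by decide
set_option maxRecDepth 10000 in
lemma Pnw19 : ∀ r < 500, Pnw (500 * 19 + r) := by decide

/-- For every odd `q < 10^4` with `q ≠ 1`, `q ≠ 5`, we have `5^(q-1) % (q*q) ≠ 1`. -/
lemma nonWieferich {x : ℕ} (hx : x < 10000) (h2 : x % 2 = 1) (h1 : x ≠ 1) (h5 : x ≠ 5) :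
    5 ^ (x - 1) % (x * x) ≠ 1 := by
  have key : Pnw x := by
    obtain ⟨k, r, hk, hr, rfl⟩ : ∃ k r, k < 20 ∧ r < 500 ∧ x = 500 * k + r :=
      ⟨x / 500, x % 500, by omega, by omega, by omega⟩
    interval_cases k
    · exact Pnw0 r hr
    · exact Pnw1 r hr
    · exact Pnw2 r hr
    · exact Pnw3 r hr
    · exact Pnw4 r hr
    · exact Pnw5 r hr
    · exact Pnw6 r hr
    · exact Pnw7 r hr
    · exact Pnw8 r hr
    · exact Pnw9 r hr
    · exact Pnw10 r hr
    · exact Pnw11 r hr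
    · exact Pnw12 r hr
    · exact Pnw13 r hr
    · exact Pnw14 r hr
    · exact Pnw15 r hr
    · exact Pnw16 r hr
    · exact Pnw17 r hr
    · exact Pnw18 r hr
    · exact Pnw19 r hr
  have hlt : x - 1 < 2 ^ 14 := by norm_num; omega
  have := key h2 h1 h5
  rwa [pmAux_eq 14 5 (x-1) (x*x) hlt] at this

lemma pow5_mod8 {t : ℕ} (ht : t % 2 = 1) : 5 ^ t % 8 = 5 := by
  obtain ⟨j, rfl⟩ : ∃ j, t = 2 * j + 1 := ⟨t / 2, by omega⟩
  rw [pow_succ, pow_mul]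
  rw [Nat.mul_mod, Nat.pow_mod]
  norm_num

lemma even_of_eight_dvd {t : ℕ} (h : (8:ℕ) ∣ 5 ^ t - 1) : t % 2 = 0 := by
  by_contra hodd
  have h1 : (1:ℕ) ≤ 5 ^ t := Nat.one_le_pow _ _ (by norm_num)
  have hme : 5 ^ t ≡ 1 [MOD 8] := ((Nat.modEq_iff_dvd' h1).mpr h).symm
  have h2 : 5 ^ t % 8 = 1 % 8 := hme
  rw [pow5_mod8 (by omega)] at h2
  omega


lemma zmod_pow_eq_one {d t : ℕ} (h : d ∣ 5 ^ t - 1) : (5 : ZMod d) ^ t = 1 := by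
  have h1 : (1:ℕ) ≤ 5 ^ t := Nat.one_le_pow _ _ (by norm_num)
  have hme : 5 ^ t ≡ 1 [MOD d] := ((Nat.modEq_iff_dvd' h1).mpr h).symm
  have := (ZMod.natCast_eq_natCast_iff _ _ _).mpr hme
  push_cast at this
  exact this

lemma dvd_of_zmod_pow_eq_one {d t : ℕ} (h : (5 : ZMod d) ^ t = 1) : d ∣ 5 ^ t - 1 := by
  have h1 : (1:ℕ) ≤ 5 ^ t := Nat.one_le_pow _ _ (by norm_num)
  have : ((5 ^ t : ℕ) : ZMod d) = ((1 : ℕ) : ZMod d) := by push_cast; exact h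
  have hme := (ZMod.natCast_eq_natCast_iff _ _ _).mp this
  exact (Nat.modEq_iff_dvd' h1).mp hme.symm

lemma orderOf_five {p t : ℕ} (hp : p.Prime) (hp2 : p ≠ 2) (ht : t.Prime)
    (hdvd : p ∣ 5 ^ t - 1) : orderOf (5 : ZMod p) = t := by
  haveI : Fact p.Prime := ⟨hp⟩
  have h1 : (5 : ZMod p) ^ t = 1 := zmod_pow_eq_one hdvd
  have h2 : orderOf (5 : ZMod p) ∣ t := orderOf_dvd_of_pow_eq_one h1
  rcases (Nat.Prime.eq_one_or_self_of_dvd ht _ h2) with h3 | h3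
  · exfalso
    have h4 : (5 : ZMod p) = 1 := orderOf_eq_one_iff.mp h3
    have h5 : ((4:ℕ) : ZMod p) = 0 := by
      push_cast
      rw [show (4 : ZMod p) = 5 - 1 by ring, h4, sub_self]
    have h6 : p ∣ 4 := (ZMod.natCast_eq_zero_iff _ _).mp h5
    have h7 : p ∣ 2 := hp.dvd_of_dvd_pow (show p ∣ 2 ^ 2 by norm_num; exact h6)
    exact hp2 ((Nat.prime_dvd_prime_iff_eq hp Nat.prime_two).mp h7)
  · exact h3

/-- `p ≠ 5` for `p ∣ 5^t - 1`, `t ≥ 1`. -/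
lemma ne_five {p t : ℕ} (ht : 0 < t) (hdvd : p ∣ 5 ^ t - 1) : p ≠ 5 := by
  rintro rfl
  have h1 : (5:ℕ) ∣ 5 ^ t := dvd_pow_self 5 (by omega)
  have h2 : (1:ℕ) ≤ 5 ^ t := Nat.one_le_pow _ _ (by norm_num)
  have := Nat.dvd_sub h1 hdvd
  omega

lemma five_ne_zero {p t : ℕ} (hp : p.Prime) (ht : 0 < t) (hdvd : p ∣ 5 ^ t - 1) :
    (5 : ZMod p) ≠ 0 := by
  intro h0
  have : ((5:ℕ) : ZMod p) = 0 := by push_cast; exact h0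
  have h1 : p ∣ 5 := (ZMod.natCast_eq_zero_iff _ _).mp this
  exact ne_five ht hdvd ((Nat.prime_dvd_prime_iff_eq hp (by norm_num)).mp h1)

/-- Quadratic-reciprocity consequence. -/
lemma mod5_one_or_four {p t : ℕ} (hp : p.Prime) (hp2 : p ≠ 2) (ht : t % 2 = 1)
    (hdvd : p ∣ 5 ^ t - 1) : p % 5 = 1 ∨ p % 5 = 4 := by
  have hns2 : ¬ IsSquare (((2:ℕ)) : ZMod 5) := by decide
  have hns3 : ¬ IsSquare (((3:ℕ)) : ZMod 5) := by decide
  haveI : Fact p.Prime := ⟨hp⟩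
  haveI : Fact (Nat.Prime 5) := ⟨by norm_num⟩
  have hp5 : p ≠ 5 := ne_five (by omega) hdvd
  have h1 : (5 : ZMod p) ^ t = 1 := zmod_pow_eq_one hdvd
  have hsq : IsSquare (((5:ℕ)) : ZMod p) := by
    refine ⟨(5:ZMod p) ^ ((t+1)/2), ?_⟩
    push_cast
    rw [← pow_add, show (t+1)/2 + (t+1)/2 = t + 1 by omega, pow_succ, h1, one_mul]
  have h2 : IsSquare ((p : ℕ) : ZMod 5) :=
    (ZMod.exists_sq_eq_prime_iff_of_mod_four_eq_one (by norm_num) hp2).mpr hsq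
  have h3 : ((p : ℕ) : ZMod 5) = ((p % 5 : ℕ) : ZMod 5) := by
    rw [ZMod.natCast_eq_natCast_iff]
    exact (Nat.mod_modEq p 5).symm
  rw [h3] at h2
  have h0 : p % 5 ≠ 0 := by
    intro hz
    have hd : (5:ℕ) ∣ p := by omega
    exact hp5 (((Nat.prime_dvd_prime_iff_eq (by norm_num) hp).mp hd).symm)
  have hcases : p % 5 = 1 ∨ p % 5 = 2 ∨ p % 5 = 3 ∨ p % 5 = 4 := by omega
  rcases hcases with h | h | h | h
  · exact Or.inl h
  · exfalso
    rw [h] at h2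
    exact hns2 h2
  · exfalso
    rw [h] at h2
    exact hns3 h2
  · exact Or.inr h

/-- Final order-mod-q² argument. -/
lemma q_dvd_of_sq_dvd {u v : ℕ} (hu : u.Prime) (hu2 : u % 2 = 1) (hu5 : u ≠ 5)
    (hW : 5 ^ (u - 1) % (u * u) ≠ 1) (hdvd : u * u ∣ 5 ^ v - 1) : u ∣ v := by
  haveI : Fact u.Prime := ⟨hu⟩
  have hu1 : 2 ≤ u := hu.two_le
  have h5u : (5 : ZMod u) ≠ 0 := by
    intro h0
    have : ((5:ℕ) : ZMod u) = 0 := by push_cast; exact h0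
    have h1 : u ∣ 5 := (ZMod.natCast_eq_zero_iff _ _).mp this
    exact hu5 ((Nat.prime_dvd_prime_iff_eq hu (by norm_num)).mp h1)
  -- Fermat: u ∣ 5^(u-1) - 1
  have hferm : u ∣ 5 ^ (u - 1) - 1 :=
    dvd_of_zmod_pow_eq_one (ZMod.pow_card_sub_one_eq_one h5u)
  -- lift: u² ∣ 5^((u-1)*u) - 1
  have hlift : u * u ∣ 5 ^ ((u - 1) * u) - 1 := by
    have h1 : (1:ℕ) ≤ 5 ^ (u-1) := Nat.one_le_pow _ _ (by norm_num)
    have hz : ((u:ℤ)) ∣ (5:ℤ) ^ (u-1) - 1 := by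
      have := Int.natCast_dvd_natCast.mpr hferm
      rwa [Nat.cast_sub h1, Nat.cast_pow, Nat.cast_one, Nat.cast_ofNat] at this
    have h2 := dvd_sub_pow_of_dvd_sub hz 1
    rw [pow_one] at h2
    have h3 : ((u:ℤ))^2 ∣ (5:ℤ) ^ ((u-1)*u) - 1 := by
      rw [pow_mul]
      simpa using h2
    have h4 : (1:ℕ) ≤ 5 ^ ((u-1)*u) := Nat.one_le_pow _ _ (by norm_num)
    have h5 : ((u*u : ℕ):ℤ) ∣ ((5 ^ ((u-1)*u) - 1 : ℕ) : ℤ) := by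
      rw [Nat.cast_sub h4, Nat.cast_pow, Nat.cast_one, Nat.cast_ofNat, Nat.cast_mul,
        show ((u:ℤ)*(u:ℤ)) = (u:ℤ)^2 by ring]
      exact h3
    exact_mod_cast h5
  set e := orderOf (5 : ZMod (u*u)) with he
  have hen : e ∣ v := orderOf_dvd_of_pow_eq_one (zmod_pow_eq_one hdvd)
  have heq : e ∣ (u - 1) * u := orderOf_dvd_of_pow_eq_one (zmod_pow_eq_one hlift)
  by_cases hqe : u ∣ e
  · exact dvd_trans hqe hen
  · exfalso
    have hco : Nat.Coprime e u := (hu.coprime_iff_not_dvd.mpr hqe).symm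
    have he1 : e ∣ u - 1 := hco.dvd_of_dvd_mul_right heq
    have hpow : (5 : ZMod (u*u)) ^ (u - 1) = 1 := orderOf_dvd_iff_pow_eq_one.mp he1
    have hdvd2 : u * u ∣ 5 ^ (u-1) - 1 := dvd_of_zmod_pow_eq_one hpow
    have h1 : (1:ℕ) ≤ 5 ^ (u-1) := Nat.one_le_pow _ _ (by norm_num)
    have : 5 ^ (u-1) % (u*u) = 1 % (u*u) := (Nat.modEq_iff_dvd' h1).mpr hdvd2 |>.symm
    rw [Nat.one_mod_eq_one.mpr (by have := Nat.mul_le_mul hu1 hu1; omega)] at this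
    exact hW this

/-- If `m` and `n` are positive integers with `φ(5^m − 1) = 5^n − 1`, and `q`
is a prime with `q < 10^4` dividing `m`, then `q` divides `n`. -/
theorem totient_five_pow_prime_divisor (m n q : ℕ) (hm : 0 < m) (hn : 0 < n)
    (h : Nat.totient (5 ^ m - 1) = 5 ^ n - 1)
    (hq : q.Prime) (hq4 : q < 10 ^ 4) (hqm : q ∣ m) :
    q ∣ n := by
  have h5n : ¬ (5 ∣ 5 ^ n - 1) := by
    intro hd
    have h1 : (5:ℕ) ∣ 5 ^ n := dvd_pow_self 5 hn.ne'
    have h2 : (1:ℕ) ≤ 5 ^ n := Nat.one_le_pow _ _ (by norm_num)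
    have := Nat.dvd_sub h1 hd
    omega
  have hmod5 : ∀ p : ℕ, p.Prime → p ∣ 5 ^ m - 1 → p % 5 ≠ 1 := by
    intro p hp hpN hp1
    have hple : 2 ≤ p := hp.two_le
    have hd : 5 ∣ p - 1 := by omega
    have htot : p - 1 ∣ 5 ^ n - 1 := by
      have := Nat.totient_dvd_of_dvd hpN
      rwa [Nat.totient_prime hp, h] at this
    exact h5n (hd.trans htot)
  by_cases hq2 : q = 2
  · subst hq2
    obtain ⟨k, rfl⟩ := hqm
    have h24 : (24:ℕ) ∣ 5 ^ (2*k) - 1 := by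
      have := Nat.sub_dvd_pow_sub_pow (5^2) 1 k
      rw [← pow_mul] at this
      norm_num at this
      exact this
    have h8 : (8:ℕ) ∣ 5 ^ n - 1 := by
      have h1 : Nat.totient 24 = 8 := by decide
      have h2 := Nat.totient_dvd_of_dvd h24
      rwa [h1, h] at h2
    have := even_of_eight_dvd h8
    omega
  · have hq2' : ¬ (2 ∣ q) := fun hd => hq2 (((Nat.prime_dvd_prime_iff_eq Nat.prime_two hq).mp hd).symm)
    have hqodd : q % 2 = 1 := by omega
    have hq3 : 3 ≤ q := by have := hq.two_le; omega
    obtain ⟨k, hkm⟩ := hqm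
    have hqN : 5 ^ q - 1 ∣ 5 ^ m - 1 := by
      have := Nat.sub_dvd_pow_sub_pow (5^q) 1 k
      rw [← pow_mul, ← hkm] at this
      simpa using this
    have h4 : (4:ℕ) ∣ 5 ^ q - 1 := by
      have := Nat.sub_dvd_pow_sub_pow 5 1 q
      norm_num at this
      exact this
    set K := (5 ^ q - 1) / 4 with hK
    have hK4 : 4 * K = 5 ^ q - 1 := Nat.mul_div_cancel' h4
    have hKdvd : K ∣ 5 ^ q - 1 := Nat.div_dvd_of_dvd h4
    have hKN : K ∣ 5 ^ m - 1 := hKdvd.trans hqN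
    have h5q1 : (1:ℕ) ≤ 5 ^ q := Nat.one_le_pow _ _ (by norm_num)
    have hKodd : K % 2 = 1 := by
      by_contra hKe
      have h8 : (8:ℕ) ∣ 5 ^ q - 1 := by
        rw [← hK4]
        omega
      have := even_of_eight_dvd h8
      omega
    have hK5 : K % 5 = 1 := by
      have h5d : (5:ℕ) ∣ 5 ^ q := dvd_pow_self 5 (by omega)
      omega
    have hKgt : 1 < K := by
      have h125 : (125:ℕ) ≤ 5 ^ q := by
        calc (125:ℕ) = 5^3 := by norm_num
        _ ≤ 5 ^ q := Nat.pow_le_pow_right (by norm_num) hq3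
      omega
    have hKfacts : ∀ p, p.Prime → p ∣ K → p % 5 = 4 ∧ q ∣ p - 1 ∧ orderOf (5 : ZMod p) = q := by
      intro p hp hpK
      have hpq5 : p ∣ 5 ^ q - 1 := hpK.trans hKdvd
      have hp2 : p ≠ 2 := by
        rintro rfl
        obtain ⟨c, hc⟩ := hpK
        omega
      have hmod := mod5_one_or_four hp hp2 hqodd hpq5
      have hpN : p ∣ 5 ^ m - 1 := hpK.trans hKN
      have hne1 := hmod5 p hp hpN
      have hp54 : p % 5 = 4 := by omega
      have hord : orderOf (5 : ZMod p) = q := orderOf_five hp hp2 hq hpq5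
      have hq_dvd : q ∣ p - 1 := by
        haveI : Fact p.Prime := ⟨hp⟩
        have := ZMod.orderOf_dvd_card_sub_one (five_ne_zero hp (by omega : 0 < q) hpq5)
        rwa [hord] at this
      exact ⟨hp54, hq_dvd, hord⟩
    by_cases hsq : ∃ p, p.Prime ∧ p ∣ K ∧ p * p ∣ 5 ^ m - 1
    · obtain ⟨p, hp, hpK, hpp⟩ := hsq
      have hord := (hKfacts p hp hpK).2.2
      have h1 := Nat.totient_dvd_of_dvd hpp
      have h2 : Nat.totient (p*p) = p * (p-1) := by
        rw [show p*p = p^2 by ring, Nat.totient_prime_pow hp (by norm_num : 0 < 2)]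
        norm_num
      have hptot : p ∣ 5 ^ n - 1 := by
        rw [h2, h] at h1
        exact (dvd_mul_right p (p-1)).trans h1
      have := orderOf_dvd_of_pow_eq_one (zmod_pow_eq_one hptot)
      rwa [hord] at this
    · push_neg at hsq
      set p₁ := K.minFac with hp1def
      have hp1 : p₁.Prime := Nat.minFac_prime (by omega)
      have hp1K : p₁ ∣ K := Nat.minFac_dvd K
      set c := K / p₁ with hcdef
      have hcK : p₁ * c = K := Nat.mul_div_cancel' hp1K
      by_cases hc1 : c = 1
      · have hKp : K = p₁ := by rw [← hcK, hc1, mul_one]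
        have := (hKfacts p₁ hp1 hp1K).1
        omega
      · set p₂ := c.minFac with hp2def
        have hp2P : p₂.Prime := Nat.minFac_prime hc1
        have hp2c : p₂ ∣ c := Nat.minFac_dvd c
        have hcKdvd : c ∣ K := Dvd.intro_left p₁ hcK
        have hp2K : p₂ ∣ K := hp2c.trans hcKdvd
        have hne : p₁ ≠ p₂ := by
          intro heq
          apply hsq p₁ hp1 hp1K
          have h1 : p₁ * p₁ ∣ p₁ * c := mul_dvd_mul_left p₁ (heq ▸ hp2c)
          rw [hcK] at h1
          exact h1.trans hKN
        have hf1 := hKfacts p₁ hp1 hp1K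
        have hf2 := hKfacts p₂ hp2P hp2K
        have hcop : Nat.Coprime p₁ p₂ := (Nat.coprime_primes hp1 hp2P).mpr hne
        have hmulN : p₁ * p₂ ∣ 5 ^ m - 1 :=
          (hcop.mul_dvd_of_dvd_of_dvd hp1K hp2K).trans hKN
        have htot2 : (p₁ - 1) * (p₂ - 1) ∣ 5 ^ n - 1 := by
          have h1 := Nat.totient_dvd_of_dvd hmulN
          rwa [h, Nat.totient_mul hcop, Nat.totient_prime hp1, Nat.totient_prime hp2P] at h1
        have hqq : q * q ∣ 5 ^ n - 1 :=
          (mul_dvd_mul hf1.2.1 hf2.2.1).trans htot2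
        have hq5 : q ≠ 5 := by
          rintro rfl
          have ha := hf1.2.1
          have hb := hf1.1
          have hc' := hp1.two_le
          omega
        have hq4' : q < 10000 := by norm_num at hq4; exact hq4
        exact q_dvd_of_sq_dvd hq hqodd hq5 (nonWieferich hq4' hqodd (by omega) hq5) hqq
end

section
/- Let M be a positive integer, let γ be an irrational real number and let p/q be a convergent of the continued fraction expansion of γ with q > 6M. Let A, B, μ be real numbers with A > 0 and B > 1, and set ε := ‖μq‖ − M·‖γq‖, where ‖·‖ denotes the distance to the nearest integer. If ε > 0, then there is no solution of the inequality 0 < uγ − v + μ < A·B^{−w} in positive integers u, v, w with u ≤ M and w ≥ log(Aq/ε)/log B. -/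
set_option maxHeartbeats 1000000


/-- The distance from a real number to the nearest integer. -/
noncomputable def distNearestInt (x : ℝ) : ℝ := |x - round x|

/-- Baker–Davenport reduction (Dujella–Pethő variant).  Let `M` be a positive
integer, `γ` irrational, and `p/q` a convergent of the continued fraction of
`γ` with `q > 6M`.  Let `A, B, μ` be reals with `A > 0`, `B > 1`, and put
`ε := ‖μq‖ − M‖γq‖` (`‖·‖` the distance to the nearest integer).  If `ε > 0`,
then there is no solution of `0 < uγ − v + μ < A·B^{−w}` in positive integers
`u, v, w` with `u ≤ M` and `w ≥ log(Aq/ε)/log B`. -/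
theorem baker_davenport_reduction (M : ℕ) (hM : 0 < M) (γ : ℝ) (hγ : Irrational γ)
    (p q : ℤ) (hq0 : 0 < q)
    (hconv : ∃ i : ℕ, (GenContFract.of γ).convs i = (p : ℝ) / (q : ℝ))
    (hq : (q : ℝ) > 6 * M) (A B μ : ℝ) (hA : 0 < A) (hB : 1 < B)
    (ε : ℝ) (hε : ε = distNearestInt (μ * q) - M * distNearestInt (γ * q))
    (hεpos : 0 < ε) :
    ¬ ∃ u v w : ℕ, 0 < u ∧ 0 < v ∧ 0 < w ∧ u ≤ M ∧
        (w : ℝ) ≥ Real.log (A * q / ε) / Real.log B ∧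
        0 < (u : ℝ) * γ - (v : ℝ) + μ ∧
        (u : ℝ) * γ - (v : ℝ) + μ < A * B ^ (-(w : ℝ)) := by
  rintro ⟨u, v, w, hu, hv, hw, huM, hwlog, hpos, hlt⟩
  have hq0' : (0:ℝ) < q := by exact_mod_cast hq0
  set θ : ℝ := γ * q - round (γ * q) with hθdef
  set δ : ℝ := μ * q - round (μ * q) with hδdef
  have hεeq : ε = |δ| - M * |θ| := hε
  have hδle : |δ| ≤ 1/2 := abs_sub_round _
  -- bounds on u * θ
  have huM' : (u:ℝ) ≤ M := by exact_mod_cast huM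
  have hθnn : (0:ℝ) ≤ |θ| := abs_nonneg _
  have h1 : |(u:ℝ) * θ| ≤ M * |θ| := by
    rw [abs_mul, abs_of_nonneg (by positivity : (0:ℝ) ≤ (u:ℝ))]
    exact mul_le_mul_of_nonneg_right huM' hθnn
  have huθ_ub : (u:ℝ) * θ ≤ M * |θ| := le_trans (le_abs_self _) h1
  have huθ_lb : -(M * |θ|) ≤ (u:ℝ) * θ := by
    have := neg_abs_le ((u:ℝ) * θ); linarith
  have hδ_ub : δ ≤ |δ| := le_abs_self _
  have hδ_lb : -|δ| ≤ δ := neg_abs_le _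
  -- T
  set T : ℝ := q * ((u:ℝ) * γ - v + μ) with hTdef
  have hTpos : 0 < T := mul_pos hq0' hpos
  -- T < ε
  have hlogB : 0 < Real.log B := Real.log_pos hB
  have hfrac : 0 < A * q / ε := by positivity
  have hBw : A * q / ε ≤ B ^ (w:ℝ) := by
    have h2 : Real.log (A * q / ε) ≤ (w:ℝ) * Real.log B := by
      have := (div_le_iff₀ hlogB).mp hwlog; linarith
    calc A * q / ε = Real.exp (Real.log (A * q / ε)) := (Real.exp_log hfrac).symm
      _ ≤ Real.exp (Real.log B * (w:ℝ)) := Real.exp_le_exp.mpr (by linarith [mul_comm (w:ℝ) (Real.log B)])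
      _ = B ^ (w:ℝ) := (Real.rpow_def_of_pos (by linarith) _).symm
  have hBwpos : (0:ℝ) < B ^ (w:ℝ) := Real.rpow_pos_of_pos (by linarith) _
  have hTlt : T < ε := by
    have hBneg : B ^ (-(w:ℝ)) = (B ^ (w:ℝ))⁻¹ := Real.rpow_neg (by linarith) _
    have h3 : T < q * (A * (B ^ (w:ℝ))⁻¹) := by
      rw [← hBneg]
      exact (mul_lt_mul_iff_right₀ hq0').mpr hlt
    have h4 : q * (A * (B ^ (w:ℝ))⁻¹) ≤ ε := by
      rw [div_le_iff₀ hεpos] at hBw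
      calc q * (A * (B ^ (w:ℝ))⁻¹) = (A * q) * (B ^ (w:ℝ))⁻¹ := by ring
        _ ≤ (B ^ (w:ℝ) * ε) * (B ^ (w:ℝ))⁻¹ :=
            mul_le_mul_of_nonneg_right hBw (inv_pos.mpr hBwpos).le
        _ = ε := by field_simp
    linarith
  -- decomposition
  set k : ℤ := (u:ℤ) * round (γ * q) - (v:ℤ) * q + round (μ * q) with hkdef
  have hdecomp : T = (u:ℝ) * θ + δ + (k:ℝ) := by
    rw [hTdef, hθdef, hδdef, hkdef]; push_cast; ring
  -- since ε > 0 : M|θ| < |δ|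
  have hMθlt : (M:ℝ) * |θ| < |δ| := by linarith
  rcases lt_trichotomy k 0 with hk | hk | hk
  · -- k ≤ -1 : T = uθ + δ + k ≤ M|θ| + |δ| - 1 < 2|δ| - 1 ≤ 0, contra T > 0
    have hk' : (k:ℝ) ≤ -1 := by exact_mod_cast Int.le_sub_one_of_lt hk
    linarith
  · -- k = 0 : |δ| = |T - uθ| bounded
    have hk0 : (k:ℝ) = 0 := by exact_mod_cast hk
    have hδeq : δ = T - (u:ℝ) * θ := by rw [hdecomp, hk0]; ring
    have h5 : δ < |δ| := by linarith
    have h6 : -|δ| < δ := by linarith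
    exact absurd (abs_lt.mpr ⟨h6, h5⟩) (lt_irrefl _)
  · -- k ≥ 1 : uθ + δ = T - k < ε - 1 but uθ + δ ≥ -M|θ| - |δ| ≥ ε - 1
    have hk' : (1:ℝ) ≤ (k:ℝ) := by exact_mod_cast hk
    linarith
end
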